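/- Let $k \geq 1$ and let $A_1, \ldots, A_k$ be nonzero rational numbers with $A_k$ not a square in $\mathbb{Q}$. Let $W$ be a rational number with $\sqrt{|A_t|}\, W \geq 1 + \sum_{s=1}^k \sqrt{|A_s|}$ for all $t$, where $\sqrt{A_s}$ denotes a fixed complex square root of $A_s$. Then there is no choice of signs $\varepsilon_1, \ldots, \varepsilon_k \in \{\pm 1\}$ and rational number $x$ such that $x + \sum_{s=1}^k \varepsilon_s \sqrt{A_s}\, W^{s-1} = 0$. -/

import Mathlib

private lemma no_vanish_aux (k : ℕ) (B : Fin (k + 1) → ℝ) (Wr : ℝ)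
    (hB : ∀ s, 0 < B s) (hWb : ∀ t, B t * Wr ≥ 1 + ∑ s, B s) :
    ¬ (2 * B (Fin.last k) * Wr ^ k ≤ ∑ s : Fin k, 2 * B s.castSucc * Wr ^ (s : ℕ)) := by
  intro hineq
  have hge : B (Fin.last k) ≤ ∑ s, B s :=
    Finset.single_le_sum (fun i _ => (hB i).le) (Finset.mem_univ _)
  have hpos : 0 < ∑ s, B s := lt_of_lt_of_le (hB _) hge
  have hW1 : 1 < Wr := by nlinarith [hB (Fin.last k), hWb (Fin.last k)]
  cases k with
  | zero =>
    simp only [Finset.univ_eq_empty, Finset.sum_empty, pow_zero, mul_one] at hineq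
    nlinarith [hB (Fin.last 0)]
  | succ m =>
    have hpowle : ∀ s : Fin (m + 1), Wr ^ (s : ℕ) ≤ Wr ^ m := fun s =>
      pow_le_pow_right₀ hW1.le (Fin.is_le s)
    have hRHS : ∑ s : Fin (m + 1), 2 * B s.castSucc * Wr ^ (s : ℕ) ≤
        2 * Wr ^ m * ∑ s : Fin (m + 1), B s.castSucc := by
      rw [Finset.mul_sum]
      refine Finset.sum_le_sum fun s _ => ?_
      nlinarith [hpowle s, (hB s.castSucc).le, pow_pos (lt_trans one_pos hW1) (s : ℕ)]
    have hsub : ∑ s : Fin (m + 1), B s.castSucc ≤ ∑ s, B s := by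
      conv_rhs => rw [Fin.sum_univ_castSucc]
      nlinarith [(hB (Fin.last (m + 1))).le]
    have hWm : (0 : ℝ) < Wr ^ m := pow_pos (lt_trans one_pos hW1) m
    have hLHS : 2 * (1 + ∑ s, B s) * Wr ^ m ≤ 2 * B (Fin.last (m + 1)) * Wr ^ (m + 1) := by
      rw [pow_succ]
      nlinarith [hWb (Fin.last (m + 1))]
    nlinarith

theorem no_vanishing_sign_combination (k : ℕ) (A : Fin (k + 1) → ℚ)
    (hA : ∀ s, A s ≠ 0)
    (hk : ¬∃ r : ℚ, A (Fin.last k) = r ^ 2)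
    (sq : Fin (k + 1) → ℂ) (hsq : ∀ s, (sq s) ^ 2 = (A s : ℂ))
    (W : ℚ)
    (hW : ∀ t, Real.sqrt |(A t : ℝ)| * (W : ℝ) ≥ 1 + ∑ s, Real.sqrt |(A s : ℝ)|) :
    ¬∃ (ε : Fin (k + 1) → ℂ) (x : ℚ),
        (∀ s, ε s = 1 ∨ ε s = -1) ∧
          (x : ℂ) + ∑ s, ε s * sq s * (W : ℂ) ^ (s : ℕ) = 0 := by
  classical
  rintro ⟨ε, x, hε, hrel⟩
  -- real facts
  have hsqpos : ∀ s, 0 < Real.sqrt |(A s : ℝ)| := fun s =>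
    Real.sqrt_pos.mpr (abs_pos.mpr (by exact_mod_cast hA s))
  have hSg_ge : Real.sqrt |(A (Fin.last k) : ℝ)| ≤ (∑ s, Real.sqrt |(A s : ℝ)|) :=
    Finset.single_le_sum (f := fun s => Real.sqrt |(A s : ℝ)|)
      (fun i _ => (hsqpos i).le) (Finset.mem_univ _)
  have hSgpos : 0 < (∑ s, Real.sqrt |(A s : ℝ)|) := lt_of_lt_of_le (hsqpos _) hSg_ge
  have hWlast := hW (Fin.last k)
  have hW1 : (1 : ℝ) < (W : ℝ) := by nlinarith [hsqpos (Fin.last k)]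
  have hWpos : (0 : ℝ) < (W : ℝ) := by linarith
  -- the field K
  set p : Polynomial ℚ := ∏ s : Fin (k+1), (Polynomial.X ^ 2 - Polynomial.C (A s)) with hp
  have hpne : p ≠ 0 := by
    rw [hp, Finset.prod_ne_zero_iff]
    exact fun s _ => Polynomial.X_pow_sub_C_ne_zero (by norm_num) (A s)
  have hsplit : (p.map (algebraMap ℚ ℂ)).Splits := IsAlgClosed.splits _
  set K : IntermediateField ℚ ℂ := IntermediateField.adjoin ℚ (p.rootSet ℂ) with hK
  have hmem : ∀ s, sq s ∈ K := by
    intro s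
    apply IntermediateField.subset_adjoin
    rw [Polynomial.mem_rootSet]
    refine ⟨hpne, ?_⟩
    rw [hp, map_prod]
    apply Finset.prod_eq_zero (Finset.mem_univ s)
    simp [hsq s]
  have hsf : p.IsSplittingField ℚ K := IntermediateField.adjoin_rootSet_isSplittingField hsplit
  haveI : FiniteDimensional ℚ K := Polynomial.IsSplittingField.finiteDimensional K p
  haveI : Normal ℚ K := Normal.of_isSplittingField p
  haveI : IsGalois ℚ K := ⟨⟩
  have hff : IntermediateField.fixedField (⊤ : Subgroup (K ≃ₐ[ℚ] K)) = ⊥ := by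
    have h2 := IsGalois.fixedField_fixingSubgroup (⊥ : IntermediateField ℚ K)
    rwa [IntermediateField.fixingSubgroup_bot] at h2
  set sqK : Fin (k+1) → K := fun s => ⟨sq s, hmem s⟩ with hsqK
  have hsqKc : ∀ s, ((sqK s : K) : ℂ) = sq s := fun s => rfl
  have hsq2K : ∀ s, (sqK s) ^ 2 = ((A s : ℚ) : K) := by
    intro s
    have : (((sqK s) ^ 2 : K) : ℂ) = (((A s : ℚ) : K) : ℂ) := by
      push_cast
      exact hsq s
    exact_mod_cast this
  -- rational signs
  set εq : Fin (k+1) → ℚ := fun s => if ε s = 1 then 1 else -1 with hεq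
  have hεc : ∀ s, ((εq s : ℚ) : ℂ) = ε s := by
    intro s
    rcases hε s with h | h <;> norm_num [hεq, h]
  -- the element y and y = 0
  set y : K := (x : K) + ∑ s, (εq s : K) * sqK s * (W : K) ^ (s : ℕ) with hy
  have hy0 : y = 0 := by
    have hyc : ((y : K) : ℂ) = (0 : ℂ) := by
      rw [hy]
      push_cast
      rw [← hrel]
      congr 1
      refine Finset.sum_congr rfl fun s _ => ?_
      rw [hεc]
    exact_mod_cast hyc
  -- the automorphism σ flipping sq at last
  obtain ⟨σ, hσ⟩ : ∃ σ : K ≃ₐ[ℚ] K, σ (sqK (Fin.last k)) ≠ sqK (Fin.last k) := by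
    by_contra hcon
    push_neg at hcon
    have hfix : sqK (Fin.last k) ∈
        IntermediateField.fixedField (⊤ : Subgroup (K ≃ₐ[ℚ] K)) := fun g => hcon g
    rw [hff, IntermediateField.mem_bot] at hfix
    obtain ⟨r, hr⟩ := hfix
    refine hk ⟨r, ?_⟩
    have : ((r : ℚ) : ℂ) ^ 2 = ((A (Fin.last k) : ℚ) : ℂ) := by
      have hrc : ((r : ℚ) : ℂ) = sq (Fin.last k) := by
        rw [← hsqKc (Fin.last k), ← hr]
        rfl
      rw [hrc, hsq]
    exact_mod_cast this.symm
  have hpm : ∀ s, σ (sqK s) = sqK s ∨ σ (sqK s) = - sqK s := by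
    intro s
    apply sq_eq_sq_iff_eq_or_eq_neg.mp
    rw [← map_pow, hsq2K s, map_ratCast]
  have hlast : σ (sqK (Fin.last k)) = - sqK (Fin.last k) := (hpm _).resolve_left hσ
  -- second relation
  set c : Fin (k+1) → ℂ := fun s => ((σ (sqK s) : K) : ℂ) with hc
  have hcpm : ∀ s, c s = sq s ∨ c s = - sq s := by
    intro s
    rcases hpm s with h | h
    · left
      show ((σ (sqK s) : K) : ℂ) = sq s
      rw [h]
    · right
      show ((σ (sqK s) : K) : ℂ) = -sq s
      rw [h]
      rfl
  have hclast : c (Fin.last k) = - sq (Fin.last k) := by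
    show ((σ (sqK (Fin.last k)) : K) : ℂ) = -sq (Fin.last k)
    rw [hlast]
    push_cast
    rfl
  have hrel2 : (x : ℂ) + ∑ s, ε s * c s * (W : ℂ) ^ (s : ℕ) = 0 := by
    have hσy : σ y = 0 := by rw [hy0, map_zero]
    have hσy' : σ y = (x : K) + ∑ s, (εq s : K) * σ (sqK s) * (W : K) ^ (s : ℕ) := by
      rw [hy]
      simp only [map_add, map_sum, map_mul, map_pow, map_ratCast]
    rw [hσy'] at hσy
    have := congrArg (fun z : K => (z : ℂ)) hσy
    push_cast at this
    rw [← this]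
    congr 1
    refine Finset.sum_congr rfl fun s _ => ?_
    rw [hεc, hc]
  -- difference relation
  have hdiff : ∑ s, ε s * (sq s - c s) * (W : ℂ) ^ (s : ℕ) = 0 := by
    have e1 : ∑ s, ε s * sq s * (W : ℂ) ^ (s : ℕ) = -(x : ℂ) :=
      eq_neg_of_add_eq_zero_right hrel
    have e2 : ∑ s, ε s * c s * (W : ℂ) ^ (s : ℕ) = -(x : ℂ) :=
      eq_neg_of_add_eq_zero_right hrel2
    calc ∑ s, ε s * (sq s - c s) * (W : ℂ) ^ (s : ℕ)
        = ∑ s, (ε s * sq s * (W : ℂ) ^ (s : ℕ) - ε s * c s * (W : ℂ) ^ (s : ℕ)) := by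
          exact Finset.sum_congr rfl fun s _ => by ring
      _ = 0 := by rw [Finset.sum_sub_distrib, e1, e2, sub_self]
  rw [Fin.sum_univ_castSucc] at hdiff
  have hmain : ε (Fin.last k) * (sq (Fin.last k) - c (Fin.last k)) * (W : ℂ) ^ k =
      -∑ s : Fin k, ε s.castSucc * (sq s.castSucc - c s.castSucc) * (W : ℂ) ^ (s : ℕ) := by
    have := eq_neg_of_add_eq_zero_right hdiff
    simpa using this
  -- absolute values
  have habsW : ‖((W : ℚ) : ℂ)‖ = (W : ℝ) := by
    rw [show ((W : ℚ) : ℂ) = (((W : ℚ) : ℝ) : ℂ) by push_cast; ring, Complex.norm_real,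
      Real.norm_eq_abs, abs_of_pos hWpos]
  have habs_sq : ∀ s, ‖sq s‖ = Real.sqrt |(A s : ℝ)| := by
    intro s
    have h1 : (‖sq s‖) ^ 2 = |(A s : ℝ)| := by
      rw [← norm_pow, hsq s, show ((A s : ℚ) : ℂ) = (((A s : ℚ) : ℝ) : ℂ) by push_cast; ring,
        Complex.norm_real, Real.norm_eq_abs]
    rw [← h1, Real.sqrt_sq (norm_nonneg _)]
  have habsε : ∀ s, ‖ε s‖ = 1 := by
    intro s; rcases hε s with h | h <;> simp [h]
  have habs_c : ∀ s, ‖sq s - c s‖ ≤ 2 * Real.sqrt |(A s : ℝ)| := by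
    intro s
    rcases hcpm s with h | h
    · rw [h, sub_self, norm_zero]
      positivity
    · rw [h, sub_neg_eq_add, show sq s + sq s = 2 * sq s by ring, norm_mul, ← habs_sq s]
      simp
  have hineq : 2 * Real.sqrt |(A (Fin.last k) : ℝ)| * (W : ℝ) ^ k ≤
      ∑ s : Fin k, 2 * Real.sqrt |(A s.castSucc : ℝ)| * (W : ℝ) ^ (s : ℕ) := by
    have hL := congrArg norm hmain
    rw [norm_neg] at hL
    have hLval : ‖ε (Fin.last k) * (sq (Fin.last k) - c (Fin.last k)) *
        (W : ℂ) ^ k‖ = 2 * Real.sqrt |(A (Fin.last k) : ℝ)| * (W : ℝ) ^ k := by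
      rw [norm_mul, norm_mul, habsε, one_mul, norm_pow, habsW, hclast, sub_neg_eq_add,
        show sq (Fin.last k) + sq (Fin.last k) = 2 * sq (Fin.last k) by ring, norm_mul,
        habs_sq]
      simp
    rw [hLval] at hL
    rw [hL]
    refine le_trans (norm_sum_le _ _) (Finset.sum_le_sum fun s _ => ?_)
    rw [norm_mul, norm_mul, habsε, one_mul, norm_pow, habsW]
    have h1 := habs_c s.castSucc
    have h2 : (0 : ℝ) ≤ (W : ℝ) ^ (s : ℕ) := by positivity
    nlinarith [habs_c s.castSucc, norm_nonneg (sq s.castSucc - c s.castSucc)]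
  exact no_vanish_aux k (fun s => Real.sqrt |(A s : ℝ)|) (W : ℝ) hsqpos hW hineq
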